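/- For any constants c₁ ≠ 0, c₂, k ∈ ℝ, the function p(x₁,x₂) = 2 tanh²(c₁ x₁ - k x₂/c₁ + c₂) - 1 satisfies the PDE ((1 - p²) ∂₁∂₂p + p (∂₁p)(∂₂p)) / (1 - p²)² = k at every point where |p| < 1. -/

import Mathlib

lemma myHasDerivAt_tanh (x : ℝ) :
    HasDerivAt Real.tanh (1 - Real.tanh x ^ 2) x := by
  have hc : Real.cosh x ≠ 0 := (Real.cosh_pos x).ne'
  have h := (Real.hasDerivAt_sinh x).div (Real.hasDerivAt_cosh x) hc
  have he : (Real.sinh / Real.cosh) = Real.tanh := by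
    funext y; rw [Pi.div_apply, Real.tanh_eq_sinh_div_cosh]
  rw [he] at h
  refine h.congr_deriv ?_
  rw [Real.tanh_eq_sinh_div_cosh]
  have := Real.cosh_sq_sub_sinh_sq x
  field_simp

theorem stmt_3 (c₁ c₂ k : ℝ) (hc₁ : c₁ ≠ 0)
    (p : ℝ → ℝ → ℝ)
    (hp : p = fun x₁ x₂ => 2 * Real.tanh (c₁ * x₁ - k * x₂ / c₁ + c₂) ^ 2 - 1) :
    ∀ x₁ x₂ : ℝ, |p x₁ x₂| < 1 →
      ((1 - (p x₁ x₂) ^ 2) * deriv (fun s => deriv (fun t => p s t) x₂) x₁ +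
          p x₁ x₂ * deriv (fun s => p s x₂) x₁ * deriv (fun t => p x₁ t) x₂) /
        (1 - (p x₁ x₂) ^ 2) ^ 2 = k := by
  subst hp
  intro x₁ x₂ habs
  -- derivative in t (second variable)
  have hdt : ∀ s t : ℝ, HasDerivAt
      (fun t => 2 * Real.tanh (c₁ * s - k * t / c₁ + c₂) ^ 2 - 1)
      (-(4 * (k / c₁)) * Real.tanh (c₁ * s - k * t / c₁ + c₂) *
        (1 - Real.tanh (c₁ * s - k * t / c₁ + c₂) ^ 2)) t := by
    intro s t
    have h0 : HasDerivAt (fun t : ℝ => c₁ * s - k * t / c₁ + c₂) (0 - k / c₁) t := by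
      have h1 : HasDerivAt (fun t : ℝ => k * t / c₁) (k / c₁) t := by
        have := ((hasDerivAt_id t).const_mul k).div_const c₁
        simpa using this
      exact ((hasDerivAt_const t (c₁ * s)).sub h1).add_const c₂
    have h2 := (myHasDerivAt_tanh (c₁ * s - k * t / c₁ + c₂)).comp t h0
    have h3 := ((h2.pow 2).const_mul 2).sub_const 1
    simp only [Function.comp, Pi.pow_apply] at h3
    refine h3.congr_deriv ?_
    push_cast
    ring
  -- derivative in s (first variable)
  have hds : ∀ s t : ℝ, HasDerivAt
      (fun s => 2 * Real.tanh (c₁ * s - k * t / c₁ + c₂) ^ 2 - 1)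
      (4 * c₁ * Real.tanh (c₁ * s - k * t / c₁ + c₂) *
        (1 - Real.tanh (c₁ * s - k * t / c₁ + c₂) ^ 2)) s := by
    intro s t
    have h0 : HasDerivAt (fun s : ℝ => c₁ * s - k * t / c₁ + c₂) c₁ s := by
      have h1 : HasDerivAt (fun s : ℝ => c₁ * s) c₁ s := by
        simpa using (hasDerivAt_id s).const_mul c₁
      exact (h1.sub_const (k * t / c₁)).add_const c₂
    have h2 := (myHasDerivAt_tanh (c₁ * s - k * t / c₁ + c₂)).comp s h0
    have h3 := ((h2.pow 2).const_mul 2).sub_const 1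
    simp only [Function.comp, Pi.pow_apply] at h3
    refine h3.congr_deriv ?_
    push_cast
    ring
  -- mixed second derivative
  have hfun : (fun s => deriv (fun t => 2 * Real.tanh (c₁ * s - k * t / c₁ + c₂) ^ 2 - 1) x₂)
      = fun s => -(4 * (k / c₁)) * (Real.tanh (c₁ * s - k * x₂ / c₁ + c₂) -
          Real.tanh (c₁ * s - k * x₂ / c₁ + c₂) ^ 3) := by
    funext s
    rw [(hdt s x₂).deriv]
    ring
  have hmixed : HasDerivAt
      (fun s => -(4 * (k / c₁)) * (Real.tanh (c₁ * s - k * x₂ / c₁ + c₂) -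
          Real.tanh (c₁ * s - k * x₂ / c₁ + c₂) ^ 3))
      (-(4 * (k / c₁)) * c₁ * (1 - Real.tanh (c₁ * x₁ - k * x₂ / c₁ + c₂) ^ 2) *
        (1 - 3 * Real.tanh (c₁ * x₁ - k * x₂ / c₁ + c₂) ^ 2)) x₁ := by
    have h0 : HasDerivAt (fun s : ℝ => c₁ * s - k * x₂ / c₁ + c₂) c₁ x₁ := by
      have h1 : HasDerivAt (fun s : ℝ => c₁ * s) c₁ x₁ := by
        simpa using (hasDerivAt_id x₁).const_mul c₁
      exact (h1.sub_const (k * x₂ / c₁)).add_const c₂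
    have ht := (myHasDerivAt_tanh (c₁ * x₁ - k * x₂ / c₁ + c₂)).comp x₁ h0
    have h3 := ((ht.sub (ht.pow 3)).const_mul (-(4 * (k / c₁))))
    simp only [Function.comp, Pi.pow_apply] at h3
    refine h3.congr_deriv ?_
    push_cast
    ring
  set T := Real.tanh (c₁ * x₁ - k * x₂ / c₁ + c₂) with hT
  rw [hfun, hmixed.deriv, (hds x₁ x₂).deriv, (hdt x₁ x₂).deriv]
  simp only [← hT] at habs ⊢
  rw [abs_lt] at habs
  have hT0 : 0 < T ^ 2 := by nlinarith [habs.1]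
  have hT1 : T ^ 2 < 1 := by nlinarith [habs.2]
  have hpos : (0:ℝ) < 1 - (2 * T ^ 2 - 1) ^ 2 := by nlinarith
  field_simp
  ring
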